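/- For n i.i.d. uniform random variables on [0,1], the probability that the first draw is strictly less than k and is not the maximum (the 'continuation' event) equals k - k^n/n. -/

import Mathlib

open MeasureTheory Set

theorem continuation_round_one_prob (n : ℕ) (hn : 0 < n) (k : ℝ)
    (hk : k ∈ Set.Icc (0 : ℝ) 1) :
    (Measure.pi fun _ : Fin n => (volume : Measure ℝ).restrict (Set.Icc 0 1))
      {a | a ⟨0, hn⟩ < k ∧ ∃ i, a ⟨0, hn⟩ < a i}
      = ENNReal.ofReal (k - k ^ n / n) := by
  obtain ⟨hk0, hk1⟩ := hk
  obtain ⟨m, rfl⟩ : ∃ m, n = m + 1 := ⟨n - 1, (Nat.succ_pred_eq_of_pos hn).symm⟩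
  set μ₀ : Measure ℝ := volume.restrict (Icc 0 1) with hμ₀
  haveI : IsProbabilityMeasure μ₀ := ⟨by simp [hμ₀, Real.volume_Icc]⟩
  set μm : Measure (Fin m → ℝ) := Measure.pi fun _ => μ₀ with hμm
  have mp := measurePreserving_piFinSuccAbove (fun _ : Fin (m + 1) => μ₀) 0
  set e := MeasurableEquiv.piFinSuccAbove (fun _ : Fin (m + 1) => ℝ) 0 with he
  set S : Set (ℝ × (Fin m → ℝ)) := {p | p.1 < k ∧ ∃ j, p.1 < p.2 j} with hS
  have hSm : MeasurableSet S := by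
    apply MeasurableSet.inter
    · exact measurable_fst measurableSet_Iio
    · show MeasurableSet {p : ℝ × (Fin m → ℝ) | ∃ j, p.1 < p.2 j}
      rw [Set.setOf_exists]
      exact MeasurableSet.iUnion fun j =>
        measurableSet_lt measurable_fst ((measurable_pi_apply j).comp measurable_snd)
  have hpre : {a : Fin (m+1) → ℝ | a ⟨0, hn⟩ < k ∧ ∃ i, a ⟨0, hn⟩ < a i} = e ⁻¹' S := by
    ext a
    simp only [hS, he, MeasurableEquiv.piFinSuccAbove_apply, Fin.insertNthEquiv,
      Set.mem_preimage, Set.mem_setOf_eq, Equiv.coe_fn_symm_mk, Fin.removeNth]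
    constructor
    · rintro ⟨h1, i, h2⟩
      refine ⟨h1, ?_⟩
      rcases Fin.eq_zero_or_eq_succ i with rfl | ⟨j, rfl⟩
      · exact absurd h2 (lt_irrefl _)
      · exact ⟨j, by simpa [Fin.succAbove] using h2⟩
    · rintro ⟨h1, j, h2⟩
      exact ⟨h1, Fin.succAbove 0 j, by simpa [Fin.succAbove] using h2⟩
  rw [hpre, mp.measure_preimage hSm.nullMeasurableSet, Measure.prod_apply hSm]
  have hslice : ∀ x : ℝ, (Prod.mk x ⁻¹' S) = if x < k then {y : Fin m → ℝ | ∃ j, x < y j} else ∅ := by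
    intro x
    split_ifs with h <;> ext y <;> simp [hS, h]
  have hcompl : ∀ x : ℝ, {y : Fin m → ℝ | ∃ j, x < y j} = (Set.pi univ fun _ : Fin m => Iic x)ᶜ := by
    intro x; ext y; simp [Pi.le_def, not_forall, not_le]
  have hval : ∀ x ∈ Ico 0 k, μm {y : Fin m → ℝ | ∃ j, x < y j} = ENNReal.ofReal (1 - x ^ m) := by
    intro x hx
    rw [hcompl x,
      prob_compl_eq_one_sub (MeasurableSet.univ_pi fun _ => measurableSet_Iic),
      Measure.pi_pi]
    have hx1 : x ≤ 1 := le_trans (le_of_lt hx.2) hk1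
    have h0 : μ₀ (Iic x) = ENNReal.ofReal x := by
      rw [hμ₀, Measure.restrict_apply measurableSet_Iic]
      have : Iic x ∩ Icc 0 1 = Icc 0 x := by
        ext y
        constructor
        · rintro ⟨h1, h2, h3⟩; exact ⟨h2, h1⟩
        · rintro ⟨h1, h2⟩; exact ⟨h2, h1, le_trans h2 hx1⟩
      rw [this, Real.volume_Icc]; simp
    rw [h0]
    simp only [Finset.prod_const, Finset.card_univ, Fintype.card_fin]
    rw [ENNReal.ofReal_sub _ (pow_nonneg hx.1 m), ENNReal.ofReal_one, ENNReal.ofReal_pow hx.1]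
  have hind : (fun x => μm (Prod.mk x ⁻¹' S)) =
      Set.indicator (Iio k) (fun x => μm {y : Fin m → ℝ | ∃ j, x < y j}) := by
    funext x
    rw [hslice x]
    split_ifs with h
    · simp [Set.indicator, Set.mem_Iio, h]
    · simp [Set.indicator, Set.mem_Iio, h]
  have hIco : Iio k ∩ Icc 0 1 = Ico 0 k := by
    ext x
    constructor
    · rintro ⟨h1, h2, h3⟩; exact ⟨h2, h1⟩
    · rintro ⟨h1, h2⟩; exact ⟨h2, h1, le_trans (le_of_lt h2) hk1⟩
  rw [hind, lintegral_indicator measurableSet_Iio, hμ₀,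
    Measure.restrict_restrict measurableSet_Iio, hIco,
    setLIntegral_congr_fun measurableSet_Ico hval]
  have hint : IntegrableOn (fun x => 1 - x ^ m) (Ico 0 k) volume :=
    ((continuous_const.sub (continuous_pow m)).integrableOn_Icc).mono_set Ico_subset_Icc_self
  have hnn : 0 ≤ᵐ[volume.restrict (Ico 0 k)] fun x => 1 - x ^ m := by
    refine ae_restrict_of_forall_mem measurableSet_Ico fun x hx => ?_
    have hx1 : x ≤ 1 := le_trans (le_of_lt hx.2) hk1
    exact sub_nonneg.2 (pow_le_one₀ hx.1 hx1)
  rw [← ofReal_integral_eq_lintegral_ofReal hint hnn]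
  congr 1
  rw [setIntegral_congr_set Ico_ae_eq_Ioc, ← intervalIntegral.integral_of_le hk0,
    intervalIntegral.integral_sub intervalIntegrable_const
      (intervalIntegral.intervalIntegrable_pow m)]
  simp [integral_pow]
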